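/- Segre's Lemma of the Tangents (coordinate form): let q be an odd prime power and let O be an oval of q + 1 points in PG(2, F_q) containing the points p1 = [1:0:0], p2 = [0:1:0], p3 = [0:0:1]. Let the tangent to O at p1 be the line x2 = k1·x3, the tangent at p2 be x3 = k2·x1, and the tangent at p3 be x1 = k3·x2, with k1, k2, k3 ∈ F_q nonzero. Then k1·k2·k3 = -1. -/

import Mathlib

open Submodule Module Finset

section SegreAux

variable {K : Type*} [Field K]

private lemma segre_exists_coords {v w : Fin 3 → K} (h : w ∈ Submodule.span K {v}) :
    ∃ c : K, c * v 0 = w 0 ∧ c * v 1 = w 1 ∧ c * v 2 = w 2 := by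
  obtain ⟨c, hc⟩ := Submodule.mem_span_singleton.mp h
  exact ⟨c, by rw [← hc]; simp, by rw [← hc]; simp, by rw [← hc]; simp⟩

private lemma segre_mem_span_pair {x y w : Fin 3 → K} (c d : K)
    (h0 : c * x 0 + d * y 0 = w 0) (h1 : c * x 1 + d * y 1 = w 1)
    (h2 : c * x 2 + d * y 2 = w 2) : w ∈ Submodule.span K {x, y} := by
  refine Submodule.mem_span_pair.mpr ⟨c, d, ?_⟩
  funext i
  fin_cases i
  · simpa using h0
  · simpa using h1
  · simpa using h2

private lemma segre_span_le {v : Fin 3 → K} {W : Submodule K (Fin 3 → K)} (h : v ∈ W) :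
    Submodule.span K {v} ≤ W := by
  rwa [Submodule.span_le, Set.singleton_subset_iff]

private lemma segre_li {x y : Fin 3 → K} (hx : x ≠ 0)
    (h : ∀ a : K, ¬ (a * x 0 = y 0 ∧ a * x 1 = y 1 ∧ a * x 2 = y 2)) :
    LinearIndependent K ![x, y] := by
  rw [LinearIndependent.pair_iff' hx]
  intro a ha
  exact h a ⟨by rw [← ha]; simp, by rw [← ha]; simp, by rw [← ha]; simp⟩

private lemma segre_finrank_pair {x y : Fin 3 → K} (h : LinearIndependent K ![x, y]) :
    Module.finrank K (Submodule.span K {x, y}) = 2 := by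
  have hr : Set.range ![x, y] = {x, y} := by
    ext z; simp [Fin.exists_fin_two, or_comm]
  have := finrank_span_eq_card h
  rwa [hr, Fintype.card_fin] at this

private lemma segre_exists_gen {S : Submodule K (Fin 3 → K)}
    (hS : Module.finrank K S = 1) :
    ∃ v : Fin 3 → K, v ≠ 0 ∧ S = Submodule.span K {v} := by
  have hP : S.IsPrincipal := S.finrank_le_one_iff_isPrincipal.mp (le_of_eq hS)
  obtain ⟨v, hv⟩ := hP
  refine ⟨v, ?_, hv⟩
  rintro rfl
  rw [hv, Submodule.span_zero_singleton] at hS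
  simp at hS

private lemma segre_three_points [Fintype K] {O : Set (Submodule K (Fin 3 → K))}
    (hOoval : ∀ W : Submodule K (Fin 3 → K), Module.finrank K W = 2 →
      {S ∈ O | S ≤ W}.ncard ≤ 2)
    {W : Submodule K (Fin 3 → K)} (hW : Module.finrank K W = 2)
    {A B C : Submodule K (Fin 3 → K)}
    (hA : A ∈ O) (hB : B ∈ O) (hC : C ∈ O)
    (hAW : A ≤ W) (hBW : B ≤ W) (hCW : C ≤ W)
    (hAB : A ≠ B) (hAC : A ≠ C) (hBC : B ≠ C) : False := by
  have hfin : ({S ∈ O | S ≤ W}).Finite := Set.toFinite _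
  have hsub : ({A, B, C} : Set _) ⊆ {S ∈ O | S ≤ W} := by
    rintro S hS
    simp only [Set.mem_insert_iff, Set.mem_singleton_iff] at hS
    rcases hS with rfl | rfl | rfl <;> exact ⟨‹_›, ‹_›⟩
  have h3 : ({A, B, C} : Set (Submodule K (Fin 3 → K))).ncard = 3 := by
    rw [Set.ncard_insert_of_notMem (by simp [hAB, hAC]), Set.ncard_pair hBC]
  have := (Set.ncard_le_ncard hsub hfin).trans (hOoval W hW)
  omega

private lemma segre_span_norm_inj {a b a' b' : K}
    (h : Submodule.span K {![(1:K), a, b]} = Submodule.span K {![(1:K), a', b']}) :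
    a = a' ∧ b = b' := by
  have hm : ![(1:K), a', b'] ∈ Submodule.span K {![(1:K), a, b]} := by
    rw [h]; exact Submodule.mem_span_singleton_self _
  obtain ⟨c, h0, h1, h2⟩ := segre_exists_coords hm
  simp only [Matrix.cons_val_zero, Matrix.cons_val_one, Matrix.head_cons, mul_one] at h0 h1 h2
  subst h0
  simp only [one_mul] at h1 h2
  exact ⟨h1, h2⟩

private lemma segre_span_norm_ne_P1 {a b : K} (ha : a ≠ 0) :
    Submodule.span K {![(1:K), a, b]} ≠ Submodule.span K {![(1:K), 0, 0]} := by
  intro h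
  have hm : ![(1:K), a, b] ∈ Submodule.span K {![(1:K), 0, 0]} := by
    rw [← h]; exact Submodule.mem_span_singleton_self _
  obtain ⟨c, h0, h1, h2⟩ := segre_exists_coords hm
  simp at h0 h1 h2
  exact ha (h1 ▸ rfl)

private lemma segre_span_norm_ne_P2 (a b : K) :
    Submodule.span K {![(1:K), a, b]} ≠ Submodule.span K {![(0:K), 1, 0]} := by
  intro h
  have hm : ![(1:K), a, b] ∈ Submodule.span K {![(0:K), 1, 0]} := by
    rw [← h]; exact Submodule.mem_span_singleton_self _
  obtain ⟨c, h0, h1, h2⟩ := segre_exists_coords hm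
  simp at h0

private lemma segre_span_norm_ne_P3 (a b : K) :
    Submodule.span K {![(1:K), a, b]} ≠ Submodule.span K {![(0:K), 0, 1]} := by
  intro h
  have hm : ![(1:K), a, b] ∈ Submodule.span K {![(0:K), 0, 1]} := by
    rw [← h]; exact Submodule.mem_span_singleton_self _
  obtain ⟨c, h0, h1, h2⟩ := segre_exists_coords hm
  simp at h0

private lemma segre_wilson [Fintype K] [DecidableEq K] :
    ∏ x ∈ (univ.erase (0:K)), x = -1 := by
  have h := FiniteField.prod_univ_units_id_eq_neg_one (K := K)
  have h2 : ∏ x ∈ (univ.erase (0:K)), x = ∏ x : Kˣ, (x : K) := by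
    refine (Finset.prod_bij (fun (x : Kˣ) _ => (x : K)) ?_ ?_ ?_ ?_).symm
    · intro x _; exact Finset.mem_erase.mpr ⟨x.ne_zero, Finset.mem_univ _⟩
    · intro x _ y _ hxy; exact Units.ext hxy
    · intro x hx
      exact ⟨Units.mk0 x (Finset.mem_erase.mp hx).1, Finset.mem_univ _, rfl⟩
    · intro x _; rfl
  rw [h2]
  calc ∏ x : Kˣ, (x:K) = ((∏ x : Kˣ, x : Kˣ) : K) := (map_prod (Units.coeHom K) _ _).symm
    _ = -1 := by rw [h]; simp

end SegreAux

/-- Segre's Lemma of the Tangents (coordinate form): let q be odd, O an oval of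
q + 1 points in PG(2, F_q) containing p1 = [1:0:0], p2 = [0:1:0], p3 = [0:0:1],
with tangent lines x2 = k1·x3 at p1, x3 = k2·x1 at p2, x1 = k3·x2 at p3
(k1, k2, k3 nonzero). Then k1·k2·k3 = -1. -/
theorem segre_lemma_of_tangents (K : Type*) [Field K] [Fintype K]
    (hq : Odd (Fintype.card K))
    (O : Set (Submodule K (Fin 3 → K)))
    (hOrk : ∀ S ∈ O, Module.finrank K S = 1)
    (hOcard : O.ncard = Fintype.card K + 1)
    (hOoval : ∀ W : Submodule K (Fin 3 → K), Module.finrank K W = 2 →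
      {S ∈ O | S ≤ W}.ncard ≤ 2)
    (hp1 : Submodule.span K {![1, 0, 0]} ∈ O)
    (hp2 : Submodule.span K {![0, 1, 0]} ∈ O)
    (hp3 : Submodule.span K {![0, 0, 1]} ∈ O)
    (k1 k2 k3 : K) (hk1 : k1 ≠ 0) (hk2 : k2 ≠ 0) (hk3 : k3 ≠ 0)
    -- the line x2 = k1·x3 is tangent to O at p1:
    (ht1 : {S ∈ O | S ≤ Submodule.span K {![1, 0, 0], ![0, k1, 1]}} =
      {Submodule.span K {![1, 0, 0]}})
    -- the line x3 = k2·x1 is tangent to O at p2: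
    (ht2 : {S ∈ O | S ≤ Submodule.span K {![0, 1, 0], ![1, 0, k2]}} =
      {Submodule.span K {![0, 1, 0]}})
    -- the line x1 = k3·x2 is tangent to O at p3:
    (ht3 : {S ∈ O | S ≤ Submodule.span K {![0, 0, 1], ![k3, 1, 0]}} =
      {Submodule.span K {![0, 0, 1]}}) :
    k1 * k2 * k3 = -1 := by
  classical
  -- distinctness of the three base points
  have hP12 : Submodule.span K {![(1:K),0,0]} ≠ Submodule.span K {![(0:K),1,0]} := by
    intro h
    have hm : ![(1:K),0,0] ∈ Submodule.span K {![(0:K),1,0]} := by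
      rw [← h]; exact Submodule.mem_span_singleton_self _
    obtain ⟨c, h0, h1, h2⟩ := segre_exists_coords hm
    simp at h0
  have hP13 : Submodule.span K {![(1:K),0,0]} ≠ Submodule.span K {![(0:K),0,1]} := by
    intro h
    have hm : ![(1:K),0,0] ∈ Submodule.span K {![(0:K),0,1]} := by
      rw [← h]; exact Submodule.mem_span_singleton_self _
    obtain ⟨c, h0, h1, h2⟩ := segre_exists_coords hm
    simp at h0
  have hP23 : Submodule.span K {![(0:K),1,0]} ≠ Submodule.span K {![(0:K),0,1]} := by
    intro h
    have hm : ![(0:K),1,0] ∈ Submodule.span K {![(0:K),0,1]} := by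
      rw [← h]; exact Submodule.mem_span_singleton_self _
    obtain ⟨c, h0, h1, h2⟩ := segre_exists_coords hm
    simp at h1
  -- the finset of affine representatives
  set T : Finset (K × K) := univ.filter
    (fun p => p.1 ≠ 0 ∧ p.2 ≠ 0 ∧ Submodule.span K {![(1:K), p.1, p.2]} ∈ O) with hT
  have hmemT : ∀ {p : K × K}, p ∈ T ↔
      (p.1 ≠ 0 ∧ p.2 ≠ 0 ∧ Submodule.span K {![(1:K), p.1, p.2]} ∈ O) := by
    intro p; simp [hT]
  -- cardinality of T
  have hO' : (O \ {Submodule.span K {![(1:K),0,0]}, Submodule.span K {![(0:K),1,0]},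
      Submodule.span K {![(0:K),0,1]}}).ncard = Fintype.card K - 2 := by
    have hsub : ({Submodule.span K {![(1:K),0,0]}, Submodule.span K {![(0:K),1,0]},
        Submodule.span K {![(0:K),0,1]}} : Set (Submodule K (Fin 3 → K))) ⊆ O := by
      rintro S hS
      simp only [Set.mem_insert_iff, Set.mem_singleton_iff] at hS
      rcases hS with rfl | rfl | rfl <;> assumption
    rw [Set.ncard_diff hsub (Set.toFinite _), hOcard,
      Set.ncard_insert_of_notMem (by simp [hP12, hP13]), Set.ncard_pair hP23]
    omega
  have hTcard : T.card = Fintype.card K - 2 := by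
    rw [← hO', Set.ncard_eq_toFinset_card _ (Set.toFinite _)]
    refine Finset.card_bij (fun p _ => Submodule.span K {![(1:K), p.1, p.2]}) ?_ ?_ ?_
    · intro p hp
      obtain ⟨ha, hb, hO⟩ := hmemT.mp hp
      rw [Set.Finite.mem_toFinset]
      refine ⟨hO, ?_⟩
      simp only [Set.mem_insert_iff, Set.mem_singleton_iff]
      push_neg
      exact ⟨segre_span_norm_ne_P1 ha, segre_span_norm_ne_P2 _ _, segre_span_norm_ne_P3 _ _⟩
    · intro p hp p' hp' h
      obtain ⟨h1, h2⟩ := segre_span_norm_inj h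
      exact Prod.ext h1 h2
    · intro S hS
      rw [Set.Finite.mem_toFinset] at hS
      obtain ⟨hSO, hSne⟩ := hS
      simp only [Set.mem_insert_iff, Set.mem_singleton_iff] at hSne
      push_neg at hSne
      obtain ⟨hne1, hne2, hne3⟩ := hSne
      obtain ⟨v, hv0, rfl⟩ := segre_exists_gen (hOrk _ hSO)
      have h0 : v 0 ≠ 0 := by
        intro h0
        refine segre_three_points hOoval
          (W := Submodule.span K {![(0:K),1,0], ![(0:K),0,1]})
          (segre_finrank_pair (segre_li (by intro h; simpa using congrFun h 1)
            (by intro a ha; simp at ha)))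
          hp2 hp3 hSO
          (segre_span_le (segre_mem_span_pair 1 0 (by simp) (by simp) (by simp)))
          (segre_span_le (segre_mem_span_pair 0 1 (by simp) (by simp) (by simp)))
          (segre_span_le (segre_mem_span_pair (v 1) (v 2) (by simp [h0]) (by simp) (by simp)))
          hP23 (Ne.symm hne2) (Ne.symm hne3)
      have h1 : v 1 ≠ 0 := by
        intro h1
        refine segre_three_points hOoval
          (W := Submodule.span K {![(1:K),0,0], ![(0:K),0,1]})
          (segre_finrank_pair (segre_li (by intro h; simpa using congrFun h 0)
            (by intro a ha; simp at ha)))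
          hp1 hp3 hSO
          (segre_span_le (segre_mem_span_pair 1 0 (by simp) (by simp) (by simp)))
          (segre_span_le (segre_mem_span_pair 0 1 (by simp) (by simp) (by simp)))
          (segre_span_le (segre_mem_span_pair (v 0) (v 2) (by simp) (by simp [h1]) (by simp)))
          hP13 (Ne.symm hne1) (Ne.symm hne3)
      have h2 : v 2 ≠ 0 := by
        intro h2
        refine segre_three_points hOoval
          (W := Submodule.span K {![(1:K),0,0], ![(0:K),1,0]})
          (segre_finrank_pair (segre_li (by intro h; simpa using congrFun h 0)
            (by intro a ha; simp at ha)))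
          hp1 hp2 hSO
          (segre_span_le (segre_mem_span_pair 1 0 (by simp) (by simp) (by simp)))
          (segre_span_le (segre_mem_span_pair 0 1 (by simp) (by simp) (by simp)))
          (segre_span_le (segre_mem_span_pair (v 0) (v 1) (by simp) (by simp) (by simp [h2])))
          hP12 (Ne.symm hne1) (Ne.symm hne2)
      have hav : Submodule.span K {![(1:K), v 1 * (v 0)⁻¹, v 2 * (v 0)⁻¹]} =
          Submodule.span K {v} := by
        have hvec : ![(1:K), v 1 * (v 0)⁻¹, v 2 * (v 0)⁻¹] = (v 0)⁻¹ • v := by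
          funext i
          fin_cases i <;> simp [h0] <;> ring
        rw [hvec, Submodule.span_singleton_smul_eq (IsUnit.mk0 _ (inv_ne_zero h0)) v]
      exact ⟨(v 1 * (v 0)⁻¹, v 2 * (v 0)⁻¹),
        hmemT.mpr ⟨mul_ne_zero h1 (inv_ne_zero h0), mul_ne_zero h2 (inv_ne_zero h0),
          hav ▸ hSO⟩, hav⟩
  -- axis 1 : slopes through p1
  have hinj1 : ∀ p ∈ T, ∀ p' ∈ T, p.1 * p.2⁻¹ = p'.1 * p'.2⁻¹ → p = p' := by
    intro p hp p' hp' h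
    obtain ⟨ha, hb, hO⟩ := hmemT.mp hp
    obtain ⟨ha', hb', hO'⟩ := hmemT.mp hp'
    by_cases hAA : Submodule.span K {![(1:K), p.1, p.2]} =
        Submodule.span K {![(1:K), p'.1, p'.2]}
    · obtain ⟨e1, e2⟩ := segre_span_norm_inj hAA
      exact Prod.ext e1 e2
    · exfalso
      refine segre_three_points hOoval
        (W := Submodule.span K {![(1:K),0,0], ![(0:K), p.1 * p.2⁻¹, 1]})
        (segre_finrank_pair (segre_li (by intro hc; simpa using congrFun hc 0)
          (by intro a ha2; simp at ha2)))
        hp1 hO hO'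
        (segre_span_le (segre_mem_span_pair 1 0 (by simp) (by simp) (by simp)))
        (segre_span_le (segre_mem_span_pair 1 p.2 (by simp) (by field_simp; simp; field_simp) (by simp)))
        (segre_span_le (segre_mem_span_pair 1 p'.2
          (by simp) (by rw [h]; field_simp; simp; field_simp) (by simp)))
        (Ne.symm (segre_span_norm_ne_P1 ha)) (Ne.symm (segre_span_norm_ne_P1 ha')) hAA
  have himg1 : T.image (fun p => p.1 * p.2⁻¹) = (univ.erase (0:K)).erase k1 := by
    refine Finset.eq_of_subset_of_card_le ?_ ?_
    · intro x hx
      obtain ⟨p, hp, rfl⟩ := Finset.mem_image.mp hx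
      obtain ⟨ha, hb, hO⟩ := hmemT.mp hp
      refine Finset.mem_erase.mpr ⟨?_,
        Finset.mem_erase.mpr ⟨mul_ne_zero ha (inv_ne_zero hb), mem_univ _⟩⟩
      intro hk
      have hle : Submodule.span K {![(1:K), p.1, p.2]} ≤
          Submodule.span K {![(1:K),0,0], ![(0:K), k1, 1]} :=
        segre_span_le (segre_mem_span_pair 1 p.2
          (by simp) (by rw [← hk]; field_simp; simp; field_simp) (by simp))
      have hmem : Submodule.span K {![(1:K), p.1, p.2]} ∈
          {S ∈ O | S ≤ Submodule.span K {![(1:K),0,0], ![(0:K), k1, 1]}} := ⟨hO, hle⟩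
      rw [ht1] at hmem
      exact segre_span_norm_ne_P1 ha hmem
    · rw [Finset.card_image_of_injOn
        (fun x hx y hy => hinj1 x (Finset.mem_coe.mp hx) y (Finset.mem_coe.mp hy)),
        hTcard, Finset.card_erase_of_mem (mem_erase.mpr ⟨hk1, mem_univ _⟩),
        Finset.card_erase_of_mem (mem_univ _), Finset.card_univ]
      omega
  have hprod1 : ∏ p ∈ T, (p.1 * p.2⁻¹) = k1⁻¹ * -1 := by
    have hcalc := Finset.prod_image (s := T) (g := fun p : K × K => p.1 * p.2⁻¹) (f := fun x : K => x) hinj1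
    rw [himg1] at hcalc
    have hme := Finset.mul_prod_erase (univ.erase (0:K)) (fun x : K => x)
      (mem_erase.mpr ⟨hk1, mem_univ _⟩)
    rw [segre_wilson] at hme
    rw [← hcalc]
    field_simp
    linear_combination hme
  -- axis 2 : slopes through p2
  have hinj2 : ∀ p ∈ T, ∀ p' ∈ T, p.2 = p'.2 → p = p' := by
    intro p hp p' hp' h
    obtain ⟨ha, hb, hO⟩ := hmemT.mp hp
    obtain ⟨ha', hb', hO'⟩ := hmemT.mp hp'
    by_cases hAA : Submodule.span K {![(1:K), p.1, p.2]} =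
        Submodule.span K {![(1:K), p'.1, p'.2]}
    · obtain ⟨e1, e2⟩ := segre_span_norm_inj hAA
      exact Prod.ext e1 e2
    · exfalso
      refine segre_three_points hOoval
        (W := Submodule.span K {![(0:K),1,0], ![(1:K), 0, p.2]})
        (segre_finrank_pair (segre_li (by intro hc; simpa using congrFun hc 1)
          (by intro a ha2; simp at ha2)))
        hp2 hO hO'
        (segre_span_le (segre_mem_span_pair 1 0 (by simp) (by simp) (by simp)))
        (segre_span_le (segre_mem_span_pair p.1 1 (by simp) (by simp) (by simp)))
        (segre_span_le (segre_mem_span_pair p'.1 1 (by simp) (by simp) (by simp [h])))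
        (Ne.symm (segre_span_norm_ne_P2 _ _)) (Ne.symm (segre_span_norm_ne_P2 _ _)) hAA
  have himg2 : T.image (fun p => p.2) = (univ.erase (0:K)).erase k2 := by
    refine Finset.eq_of_subset_of_card_le ?_ ?_
    · intro x hx
      obtain ⟨p, hp, rfl⟩ := Finset.mem_image.mp hx
      obtain ⟨ha, hb, hO⟩ := hmemT.mp hp
      refine Finset.mem_erase.mpr ⟨?_, Finset.mem_erase.mpr ⟨hb, mem_univ _⟩⟩
      intro hk
      have hle : Submodule.span K {![(1:K), p.1, p.2]} ≤
          Submodule.span K {![(0:K),1,0], ![(1:K), 0, k2]} :=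
        segre_span_le (segre_mem_span_pair p.1 1
          (by simp) (by simp) (by simp [hk]))
      have hmem : Submodule.span K {![(1:K), p.1, p.2]} ∈
          {S ∈ O | S ≤ Submodule.span K {![(0:K),1,0], ![(1:K), 0, k2]}} := ⟨hO, hle⟩
      rw [ht2] at hmem
      exact segre_span_norm_ne_P2 p.1 p.2 hmem
    · rw [Finset.card_image_of_injOn
        (fun x hx y hy => hinj2 x (Finset.mem_coe.mp hx) y (Finset.mem_coe.mp hy)),
        hTcard, Finset.card_erase_of_mem (mem_erase.mpr ⟨hk2, mem_univ _⟩),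
        Finset.card_erase_of_mem (mem_univ _), Finset.card_univ]
      omega
  have hprod2 : ∏ p ∈ T, p.2 = k2⁻¹ * -1 := by
    have hcalc := Finset.prod_image (s := T) (g := fun p : K × K => p.2) (f := fun x : K => x) hinj2
    rw [himg2] at hcalc
    have hme := Finset.mul_prod_erase (univ.erase (0:K)) (fun x : K => x)
      (mem_erase.mpr ⟨hk2, mem_univ _⟩)
    rw [segre_wilson] at hme
    rw [← hcalc]
    field_simp
    linear_combination hme
  -- axis 3 : slopes through p3
  have hinj3 : ∀ p ∈ T, ∀ p' ∈ T, p.1⁻¹ = p'.1⁻¹ → p = p' := by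
    intro p hp p' hp' h
    replace h : p.1 = p'.1 := inv_injective h
    obtain ⟨ha, hb, hO⟩ := hmemT.mp hp
    obtain ⟨ha', hb', hO'⟩ := hmemT.mp hp'
    by_cases hAA : Submodule.span K {![(1:K), p.1, p.2]} =
        Submodule.span K {![(1:K), p'.1, p'.2]}
    · obtain ⟨e1, e2⟩ := segre_span_norm_inj hAA
      exact Prod.ext e1 e2
    · exfalso
      refine segre_three_points hOoval
        (W := Submodule.span K {![(0:K),0,1], ![(1:K), p.1, 0]})
        (segre_finrank_pair (segre_li (by intro hc; simpa using congrFun hc 2)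
          (by intro a ha2; simp at ha2)))
        hp3 hO hO'
        (segre_span_le (segre_mem_span_pair 1 0 (by simp) (by simp) (by simp)))
        (segre_span_le (segre_mem_span_pair p.2 1 (by simp) (by simp) (by simp)))
        (segre_span_le (segre_mem_span_pair p'.2 1 (by simp) (by simp [h]) (by simp)))
        (Ne.symm (segre_span_norm_ne_P3 _ _)) (Ne.symm (segre_span_norm_ne_P3 _ _)) hAA
  have himg3 : T.image (fun p => p.1⁻¹) = (univ.erase (0:K)).erase k3 := by
    refine Finset.eq_of_subset_of_card_le ?_ ?_
    · intro x hx
      obtain ⟨p, hp, rfl⟩ := Finset.mem_image.mp hx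
      obtain ⟨ha, hb, hO⟩ := hmemT.mp hp
      refine Finset.mem_erase.mpr ⟨?_, Finset.mem_erase.mpr ⟨inv_ne_zero ha, mem_univ _⟩⟩
      intro hk
      have hle : Submodule.span K {![(1:K), p.1, p.2]} ≤
          Submodule.span K {![(0:K),0,1], ![(k3:K), 1, 0]} :=
        segre_span_le (segre_mem_span_pair p.2 p.1
          (by rw [← hk]; field_simp; simp [ha]) (by simp) (by simp))
      have hmem : Submodule.span K {![(1:K), p.1, p.2]} ∈
          {S ∈ O | S ≤ Submodule.span K {![(0:K),0,1], ![(k3:K), 1, 0]}} := ⟨hO, hle⟩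
      rw [ht3] at hmem
      exact segre_span_norm_ne_P3 p.1 p.2 hmem
    · rw [Finset.card_image_of_injOn
        (fun x hx y hy => hinj3 x (Finset.mem_coe.mp hx) y (Finset.mem_coe.mp hy)),
        hTcard, Finset.card_erase_of_mem (mem_erase.mpr ⟨hk3, mem_univ _⟩),
        Finset.card_erase_of_mem (mem_univ _), Finset.card_univ]
      omega
  have hprod3 : ∏ p ∈ T, p.1⁻¹ = k3⁻¹ * -1 := by
    have hcalc := Finset.prod_image (s := T) (g := fun p : K × K => p.1⁻¹) (f := fun x : K => x) hinj3
    rw [himg3] at hcalc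
    have hme := Finset.mul_prod_erase (univ.erase (0:K)) (fun x : K => x)
      (mem_erase.mpr ⟨hk3, mem_univ _⟩)
    rw [segre_wilson] at hme
    rw [← hcalc]
    field_simp
    linear_combination hme
  -- combine
  have hone : ∏ p ∈ T, ((p.1 * p.2⁻¹) * p.2 * p.1⁻¹) = 1 := by
    refine Finset.prod_eq_one (fun p hp => ?_)
    obtain ⟨ha, hb, _⟩ := hmemT.mp hp
    field_simp
  have hsplit : ∏ p ∈ T, ((p.1 * p.2⁻¹) * p.2 * p.1⁻¹) =
      (∏ p ∈ T, (p.1 * p.2⁻¹)) * (∏ p ∈ T, p.2) * (∏ p ∈ T, p.1⁻¹) := by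
    rw [Finset.prod_mul_distrib, Finset.prod_mul_distrib]
  rw [hsplit, hprod1, hprod2, hprod3] at hone
  have hk123 : k1 * k2 * k3 ≠ 0 := mul_ne_zero (mul_ne_zero hk1 hk2) hk3
  field_simp at hone
  linear_combination -hone
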